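/- arXiv:2403.01403 — 2 statements merged into one kernel-verified Lean document; each statement's English description precedes it below -/
import Mathlib

section
/- If the time points t₁,…,t_n are pairwise distinct, the matrix with entries Σ_{ij} = σ² exp(-|t_i - t_j|/T) (σ > 0, T > 0) is strictly positive definite, hence invertible. -/
open Matrix Real

lemma myPosDef_submatrix_equiv {m n : Type*} [Fintype m] [Fintype n] [DecidableEq m] [DecidableEq n]
    {M : Matrix n n ℝ} (hM : M.PosDef) (e : m ≃ n) : (M.submatrix e e).PosDef := by
  refine Matrix.PosDef.of_dotProduct_mulVec_pos (hM.1.submatrix e) fun x hx => ?_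
  rw [Matrix.submatrix_mulVec_equiv]
  have hx' : x ∘ e.symm ≠ 0 := by
    intro h
    apply hx
    funext i
    have := congrFun h (e i)
    simpa using this
  have := hM.dotProduct_mulVec_pos hx'
  convert this using 1
  simp only [dotProduct]
  exact Fintype.sum_equiv e _ _ (fun i => by simp)


lemma key {m : ℕ} (σ T : ℝ) (hσ : 0 < σ) (hT : 0 < T)
    (t : Fin m → ℝ) (hst : StrictMono t) :
    (Matrix.of fun i j : Fin m => σ ^ 2 * Real.exp (-|t i - t j| / T)).PosDef := by
  cases m with
  | zero =>
    refine ⟨by ext i j; exact i.elim0, fun x hx => absurd (Subsingleton.elim x 0) hx⟩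
  | succ m =>
    set f : Fin (m + 1) → ℝ := fun j => Real.exp (2 * t j / T) with hf
    have hfmono : StrictMono f := fun a b hab => by
      apply Real.exp_lt_exp.mpr
      have := hst hab
      gcongr
    set d : Fin (m + 1) → ℝ := fun j =>
      Fin.cases (f 0) (fun k => f k.succ - f k.castSucc) j with hd
    have hdpos : ∀ j, 0 < d j := by
      intro j
      induction j using Fin.cases with
      | zero => simpa [hd] using Real.exp_pos _
      | succ k =>
        simp only [hd, Fin.cases_succ]
        exact sub_pos.mpr (hfmono (Fin.castSucc_lt_succ (i := k)))
    have hsum : ∀ j : Fin (m + 1), ∑ k ∈ Finset.Iic j, d k = f j := by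
      intro j
      induction j using Fin.induction with
      | zero =>
        rw [show Finset.Iic (0 : Fin (m + 1)) = {0} by ext x; simp [Fin.le_zero_iff],
          Finset.sum_singleton]
        simp [hd]
      | succ k ih =>
        have hins : Finset.Iic k.succ = insert k.succ (Finset.Iic k.castSucc) := by
          ext x
          simp only [Finset.mem_Iic, Finset.mem_insert, Fin.le_def, Fin.val_succ,
            Fin.coe_castSucc, ← Fin.val_eq_val, Fin.val_succ]
          omega
        rw [hins, Finset.sum_insert (by
          simp only [Finset.mem_Iic]
          exact not_le.mpr (Fin.castSucc_lt_succ (i := k))), ih]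
        simp only [hd, Fin.cases_succ]
        ring
    set B : Matrix (Fin (m + 1)) (Fin (m + 1)) ℝ :=
      Matrix.of (fun i j => if j ≤ i then σ * Real.exp (-t i / T) * Real.sqrt (d j) else 0)
      with hB
    have habs : ∀ i j : Fin (m + 1),
        Real.exp (-t i / T) * Real.exp (-t j / T) * f (min i j)
          = Real.exp (-|t i - t j| / T) := by
      intro i j
      rw [hf, ← Real.exp_add, ← Real.exp_add]
      congr 1
      have hmin : t (min i j) = min (t i) (t j) := hst.monotone.map_min
      rcases le_total (t i) (t j) with h | h
      · rw [hmin, min_eq_left h, abs_of_nonpos (by linarith)]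
        field_simp
        ring
      · rw [hmin, min_eq_right h, abs_of_nonneg (by linarith)]
        field_simp
        ring
    have hMB : (Matrix.of fun i j : Fin (m+1) => σ ^ 2 * Real.exp (-|t i - t j| / T))
        = B * Bᵀ := by
      ext i j
      rw [Matrix.mul_apply]
      have hterm : ∀ k, B i k * Bᵀ k j =
          if k ≤ min i j then
            σ ^ 2 * Real.exp (-t i / T) * Real.exp (-t j / T) * d k else 0 := by
        intro k
        simp only [hB, Matrix.transpose_apply, Matrix.of_apply, le_min_iff]
        by_cases h1 : k ≤ i
        · by_cases h2 : k ≤ j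
          · rw [if_pos h1, if_pos h2, if_pos ⟨h1, h2⟩]
            have h := Real.mul_self_sqrt (hdpos k).le
            linear_combination (σ ^ 2 * Real.exp (-t i / T) * Real.exp (-t j / T)) * h
          · rw [if_neg h2, mul_zero, if_neg (show ¬(k ≤ i ∧ k ≤ j) from fun h => h2 h.2)]
        · rw [if_neg h1, zero_mul, if_neg (show ¬(k ≤ i ∧ k ≤ j) from fun h => h1 h.1)]
      simp_rw [hterm, ← Finset.mem_Iic]
      rw [Finset.sum_ite_mem, Finset.univ_inter, ← Finset.mul_sum, hsum]
      rw [Matrix.of_apply, ← habs i j]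
      ring
    have hdetB : 0 < B.det := by
      rw [Matrix.det_of_lowerTriangular B (fun i j hij => by
        simp only [hB, Matrix.of_apply]
        exact if_neg (not_le.mpr hij))]
      refine Finset.prod_pos fun i _ => ?_
      simp only [hB, Matrix.of_apply, if_pos (le_refl i)]
      have h1 := Real.sqrt_pos.mpr (hdpos i)
      positivity
    rw [hMB]
    refine Matrix.PosDef.of_dotProduct_mulVec_pos ?_ fun x hx => ?_
    · rw [Matrix.IsHermitian, Matrix.conjTranspose_eq_transpose_of_trivial,
        Matrix.transpose_mul, Matrix.transpose_transpose]
    · have hstar : star x = x := by simp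
      rw [hstar, ← Matrix.mulVec_mulVec, Matrix.dotProduct_mulVec,
        ← Matrix.mulVec_transpose]
      set y := Bᵀ *ᵥ x with hy
      have hy0 : y ≠ 0 := by
        intro h0
        exact hx (Matrix.eq_zero_of_mulVec_eq_zero
          (by rw [Matrix.det_transpose]; exact hdetB.ne') h0)
      have hnn : 0 ≤ y ⬝ᵥ y := Finset.sum_nonneg fun i _ => mul_self_nonneg _
      rcases hnn.lt_or_eq with h | h
      · exact h
      · exact absurd (dotProduct_self_eq_zero.mp h.symm) hy0


/-- For pairwise distinct time points, the exponential kernel matrix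
Σᵢⱼ = σ² exp(-|tᵢ - tⱼ|/T) is strictly positive definite, hence invertible. -/
theorem exp_kernel_posDef {n : ℕ} (σ T : ℝ) (hσ : 0 < σ) (hT : 0 < T)
    (t : Fin n → ℝ) (ht : Function.Injective t) :
    (Matrix.of fun i j : Fin n => σ ^ 2 * Real.exp (-|t i - t j| / T)).PosDef ∧
      IsUnit (Matrix.of fun i j : Fin n => σ ^ 2 * Real.exp (-|t i - t j| / T)) := by
  set e := Tuple.sort t with he
  have hsm : StrictMono (t ∘ e) :=
    (Tuple.monotone_sort t).strictMono_of_injective (ht.comp e.injective)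
  have hpd' := key σ T hσ hT (t ∘ e) hsm
  have heq : (Matrix.of fun i j : Fin n => σ ^ 2 * Real.exp (-|t i - t j| / T)) =
      (Matrix.of fun i j : Fin n => σ ^ 2 * Real.exp (-|(t ∘ e) i - (t ∘ e) j| / T)).submatrix
        e.symm e.symm := by
    ext i j
    simp [Matrix.submatrix_apply]
  have hpd := heq ▸ myPosDef_submatrix_equiv hpd' e.symm
  exact ⟨hpd, (Matrix.isUnit_iff_isUnit_det _).mpr (isUnit_iff_ne_zero.mpr hpd.det_pos.ne')⟩
end

section
/- Full misspecified Bayes risk formula: with H = Gᵀ Σ_ε⁻¹ G, H̃ = Gᵀ Σ_ε⁻¹ G̃, Σ_pos = (H + Σ_pr⁻¹)⁻¹, data generated as Y = G̃ m + ε with m ~ N(μ_pr, Σ_pr) and ε ~ N(0, Σ_ε) independent, and μ_pos = Σ_pos(Σ_pr⁻¹ μ_pr + Gᵀ Σ_ε⁻¹ Y), the Bayes risk E[‖μ_pos - m‖²] equals Tr(Σ_pos) + Tr(Σ_pos (H̃ - H)(Σ_pr + μ_pr μ_prᵀ)(H̃ - H)ᵀ Σ_pos) - Tr(Σ_pos ((H̃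 - H) + (H̃ - H)ᵀ) Σ_pos). -/
open Matrix Real MeasureTheory

/-- The density of the multivariate Gaussian N(μ, S) on ℝⁿ. -/
noncomputable def gaussPdf {n : ℕ} (μ : Fin n → ℝ) (S : Matrix (Fin n) (Fin n) ℝ)
    (x : Fin n → ℝ) : ℝ :=
  (Real.sqrt ((2 * Real.pi) ^ n * S.det))⁻¹ *
    Real.exp (-(1/2) * ((x - μ) ⬝ᵥ (S⁻¹ *ᵥ (x - μ))))

noncomputable def phi (t : ℝ) : ℝ := (Real.sqrt (2 * Real.pi))⁻¹ * Real.exp (-(1/2) * t^2)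

lemma sqrt_two_pi_pos : 0 < Real.sqrt (2 * Real.pi) := Real.sqrt_pos.2 (by positivity)

lemma integrable_exp_half : Integrable (fun t : ℝ => Real.exp (-(1/2) * t^2)) :=
  integrable_exp_neg_mul_sq (by norm_num)

lemma integral_exp_half : ∫ t : ℝ, Real.exp (-(1/2) * t^2) = Real.sqrt (2 * Real.pi) := by
  have h := integral_gaussian (1/2 : ℝ)
  rw [h]
  congr 1
  ring

lemma integrable_phi : Integrable phi := integrable_exp_half.const_mul _

lemma integral_phi : ∫ t, phi t = 1 := by
  unfold phi
  rw [integral_const_mul, integral_exp_half, inv_mul_cancel₀ (ne_of_gt sqrt_two_pi_pos)]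

lemma integrable_id_phi : Integrable (fun t => phi t * t) := by
  have h := (integrable_mul_exp_neg_mul_sq (by norm_num : (0:ℝ) < 1/2)).const_mul (Real.sqrt (2 * Real.pi))⁻¹
  refine h.congr ?_
  filter_upwards with t
  unfold phi; ring

lemma integral_id_phi : ∫ t, phi t * t = 0 := by
  have h : ∫ t : ℝ, phi (-t) * (-t) = ∫ t, phi t * t :=
    (Measure.measurePreserving_neg (volume : Measure ℝ)).integral_comp
      (Homeomorph.neg ℝ).measurableEmbedding (fun t => phi t * t)
  have h2 : ∀ t : ℝ, phi (-t) * (-t) = -(phi t * t) := by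
    intro t; unfold phi; ring_nf
  simp_rw [h2, integral_neg] at h
  linarith

lemma integrable_sq_phi : Integrable (fun t => phi t * (t * t)) := by
  have h0 : Integrable (fun t : ℝ => t ^ 2 * Real.exp (-(1/2) * t^2)) := by
    have := integrable_rpow_mul_exp_neg_mul_sq (by norm_num : (0:ℝ) < 1/2) (s := 2) (by norm_num)
    refine this.congr ?_
    filter_upwards with t
    rw [show ((2:ℝ) = ((2:ℕ):ℝ)) by norm_num, Real.rpow_natCast]
  refine (h0.const_mul (Real.sqrt (2 * Real.pi))⁻¹).congr ?_
  filter_upwards with t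
  unfold phi; ring

lemma integral_sq_exp_half : ∫ t : ℝ, t ^ 2 * Real.exp (-(1/2) * t^2) = Real.sqrt (2 * Real.pi) := by
  have hu : ∀ x : ℝ, HasDerivAt (fun x : ℝ => x) 1 x := fun x => hasDerivAt_id x
  have hv : ∀ x : ℝ, HasDerivAt (fun x : ℝ => -Real.exp (-(1/2) * x^2)) (x * Real.exp (-(1/2) * x^2)) x := by
    intro x
    have h1 : HasDerivAt (fun x : ℝ => -(1/2) * x^2) (-(1/2) * (2 * x)) x := by
      simpa using ((hasDerivAt_pow 2 x).const_mul (-(1/2) : ℝ))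
    have h2 : HasDerivAt (fun x : ℝ => -Real.exp (-(1/2) * x^2))
        (-(Real.exp (-(1/2) * x^2) * (-(1/2) * (2 * x)))) x := (h1.exp).neg
    convert h2 using 1
    ring
  have key := integral_mul_deriv_eq_deriv_mul_of_integrable
    (u := fun x : ℝ => x) (v := fun x : ℝ => -Real.exp (-(1/2) * x^2))
    (u' := fun _ => 1) (v' := fun x => x * Real.exp (-(1/2) * x^2))
    (fun x _ => hu x) (fun x _ => hv x) ?_ ?_ ?_
  · rw [show (∫ x : ℝ, x * (x * Real.exp (-(1/2) * x^2))) = ∫ t : ℝ, t ^ 2 * Real.exp (-(1/2) * t^2) from by congr 1; funext x; ring] at key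
    rw [key]
    simp only [Pi.mul_apply, one_mul]
    rw [integral_neg, neg_neg, integral_exp_half]
  · refine (integrable_sq_phi.const_mul (Real.sqrt (2 * Real.pi))).congr ?_
    filter_upwards with t
    simp only [Pi.mul_apply]
    unfold phi
    field_simp
  · refine integrable_exp_half.neg.congr ?_
    filter_upwards with t
    simp [Pi.mul_apply]
  · refine (integrable_mul_exp_neg_mul_sq (by norm_num : (0:ℝ) < 1/2)).neg.congr ?_
    filter_upwards with t
    simp only [Pi.neg_apply, Pi.mul_apply]
    ring

lemma integral_sq_phi : ∫ t, phi t * (t * t) = 1 := by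
  have : ∀ t : ℝ, phi t * (t * t) = (Real.sqrt (2 * Real.pi))⁻¹ * (t ^ 2 * Real.exp (-(1/2) * t^2)) := by
    intro t; unfold phi; ring
  simp_rw [this]
  rw [integral_const_mul, integral_sq_exp_half, inv_mul_cancel₀ (ne_of_gt sqrt_two_pi_pos)]

noncomputable def stdPdf {n : ℕ} (z : Fin n → ℝ) : ℝ := ∏ i, phi (z i)

lemma integrable_stdPdf {n : ℕ} : Integrable (stdPdf (n := n)) :=
  Integrable.fintype_prod (f := fun _ t => phi t) (fun _ => integrable_phi)

lemma integral_stdPdf {n : ℕ} : ∫ z : Fin n → ℝ, stdPdf z = 1 := by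
  unfold stdPdf
  rw [MeasureTheory.integral_fintype_prod_volume_eq_prod (f := fun _ t => phi t)]
  simp [integral_phi]

/-- uniform family for first/second moments -/
noncomputable def mom {n : ℕ} (i j : Fin n) (k : Fin n) (t : ℝ) : ℝ :=
  phi t * ((if i = k then t else 1) * (if j = k then t else 1))

lemma stdPdf_mul_eq_prod_mom {n : ℕ} (i j : Fin n) (z : Fin n → ℝ) :
    stdPdf z * (z i * z j) = ∏ k, mom i j k (z k) := by
  unfold stdPdf mom
  rw [Finset.prod_mul_distrib, Finset.prod_mul_distrib, Finset.prod_ite_eq, Finset.prod_ite_eq]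
  simp [mul_assoc]

lemma integrable_mom {n : ℕ} (i j k : Fin n) : Integrable (mom i j k) := by
  unfold mom
  by_cases hik : i = k <;> by_cases hjk : j = k <;> simp [hik, hjk]
  · exact integrable_sq_phi
  · exact integrable_id_phi
  · exact integrable_id_phi
  · exact integrable_phi

lemma integral_mom {n : ℕ} (i j k : Fin n) :
    ∫ t, mom i j k t = if i = k then (if j = k then 1 else 0) else (if j = k then 0 else 1) := by
  unfold mom
  by_cases hik : i = k <;> by_cases hjk : j = k <;>
    simp [hik, hjk, integral_sq_phi, integral_id_phi, integral_phi]

lemma integrable_std_mul2 {n : ℕ} (i j : Fin n) :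
    Integrable (fun z : Fin n → ℝ => stdPdf z * (z i * z j)) := by
  have := Integrable.fintype_prod (f := fun k t => mom i j k t) (fun k => integrable_mom i j k)
  refine this.congr ?_
  filter_upwards with z
  rw [stdPdf_mul_eq_prod_mom]

lemma integral_std_mul2 {n : ℕ} (i j : Fin n) :
    ∫ z : Fin n → ℝ, stdPdf z * (z i * z j) = if i = j then 1 else 0 := by
  simp_rw [stdPdf_mul_eq_prod_mom]
  rw [MeasureTheory.integral_fintype_prod_volume_eq_prod (f := fun k t => mom i j k t)]
  simp_rw [integral_mom]
  by_cases hij : i = j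
  · subst hij
    simp only [if_true]
    refine Finset.prod_eq_one fun x _ => ?_
    by_cases h : i = x <;> simp [h]
  · simp only [hij, if_false]
    refine Finset.prod_eq_zero (Finset.mem_univ i) ?_
    simp [Ne.symm, fun h => hij h]

/-- first moment family -/
noncomputable def mom1 {n : ℕ} (j : Fin n) (k : Fin n) (t : ℝ) : ℝ :=
  phi t * (if j = k then t else 1)

lemma stdPdf_mul_eq_prod_mom1 {n : ℕ} (j : Fin n) (z : Fin n → ℝ) :
    stdPdf z * z j = ∏ k, mom1 j k (z k) := by
  unfold stdPdf mom1
  rw [Finset.prod_mul_distrib, Finset.prod_ite_eq]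
  simp

lemma integrable_mom1 {n : ℕ} (j k : Fin n) : Integrable (mom1 j k) := by
  unfold mom1
  by_cases hjk : j = k <;> simp [hjk]
  · exact integrable_id_phi
  · exact integrable_phi

lemma integrable_std_mul1 {n : ℕ} (j : Fin n) :
    Integrable (fun z : Fin n → ℝ => stdPdf z * z j) := by
  have := Integrable.fintype_prod (f := fun k t => mom1 j k t) (fun k => integrable_mom1 j k)
  refine this.congr ?_
  filter_upwards with z
  rw [stdPdf_mul_eq_prod_mom1]

lemma integral_std_mul1 {n : ℕ} (j : Fin n) :
    ∫ z : Fin n → ℝ, stdPdf z * z j = 0 := by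
  simp_rw [stdPdf_mul_eq_prod_mom1]
  rw [MeasureTheory.integral_fintype_prod_volume_eq_prod (f := fun k t => mom1 j k t)]
  refine Finset.prod_eq_zero (Finset.mem_univ j) ?_
  unfold mom1
  simp [integral_id_phi]

lemma std_quad {n : ℕ} (c : ℝ) (a : Fin n → ℝ) (M : Matrix (Fin n) (Fin n) ℝ) :
    ∫ z : Fin n → ℝ, stdPdf z * (c + 2 * (a ⬝ᵥ z) + z ⬝ᵥ (M *ᵥ z)) = c + M.trace := by
  have hpt : ∀ z : Fin n → ℝ, stdPdf z * (c + 2 * (a ⬝ᵥ z) + z ⬝ᵥ (M *ᵥ z)) =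
      c * stdPdf z + (∑ j, (2 * a j) * (stdPdf z * z j)) +
        ∑ i, ∑ j, M i j * (stdPdf z * (z i * z j)) := by
    intro z
    simp only [dotProduct, mulVec, mul_add, Finset.mul_sum, Finset.sum_mul]
    congr 1
    · congr 1
      · ring
      · exact Finset.sum_congr rfl fun j _ => by ring
    · exact Finset.sum_congr rfl fun i _ => Finset.sum_congr rfl fun j _ => by ring
  simp_rw [hpt]
  have I1 : Integrable (fun z : Fin n → ℝ => c * stdPdf z) := integrable_stdPdf.const_mul c
  have I2 : Integrable (fun z : Fin n → ℝ => ∑ j, (2 * a j) * (stdPdf z * z j)) :=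
    integrable_finset_sum _ (fun j _ => (integrable_std_mul1 j).const_mul _)
  have I3 : Integrable (fun z : Fin n → ℝ => ∑ i, ∑ j, M i j * (stdPdf z * (z i * z j))) :=
    integrable_finset_sum _ (fun i _ =>
      integrable_finset_sum _ (fun j _ => (integrable_std_mul2 i j).const_mul _))
  have I12 : Integrable (fun z : Fin n → ℝ =>
      c * stdPdf z + ∑ j, (2 * a j) * (stdPdf z * z j)) := I1.add I2
  rw [integral_add I12 I3, integral_add I1 I2]
  rw [integral_const_mul, integral_stdPdf]
  rw [integral_finset_sum _ (fun j _ => (integrable_std_mul1 j).const_mul _)]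
  rw [integral_finset_sum _ (fun i (_ : i ∈ Finset.univ) =>
      integrable_finset_sum (Finset.univ : Finset (Fin n))
        (fun j _ => (integrable_std_mul2 i j).const_mul (M i j)))]
  have e3' : ∀ i : Fin n, ∫ z : Fin n → ℝ, ∑ j, M i j * (stdPdf z * (z i * z j)) =
      ∑ j, ∫ z : Fin n → ℝ, M i j * (stdPdf z * (z i * z j)) := fun i =>
    integral_finset_sum _ (fun j _ => (integrable_std_mul2 i j).const_mul (M i j))
  simp_rw [e3']
  have e2 : ∀ j : Fin n, ∫ z : Fin n → ℝ, (2 * a j) * (stdPdf z * z j) = 0 := by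
    intro j; rw [integral_const_mul, integral_std_mul1, mul_zero]
  have e3 : ∀ i : Fin n, (∑ j, ∫ z : Fin n → ℝ, M i j * (stdPdf z * (z i * z j))) = M i i := by
    intro i
    have : ∀ j : Fin n, ∫ z : Fin n → ℝ, M i j * (stdPdf z * (z i * z j)) =
        M i j * (if i = j then 1 else 0) := by
      intro j; rw [integral_const_mul, integral_std_mul2]
    simp_rw [this, mul_ite, mul_one, mul_zero]
    simp
  simp_rw [e2, e3]
  simp only [Finset.sum_const_zero, add_zero]
  rw [Matrix.trace]
  simp [Matrix.diag]

lemma continuous_gaussPdf {n : ℕ} (μ : Fin n → ℝ) (S : Matrix (Fin n) (Fin n) ℝ) :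
    Continuous (gaussPdf μ S) := by
  unfold gaussPdf
  refine continuous_const.mul (Real.continuous_exp.comp (continuous_const.mul ?_))
  have h1 : Continuous (fun x : Fin n → ℝ => x - μ) := continuous_id.sub continuous_const
  exact h1.dotProduct (continuous_const.matrix_mulVec h1)

lemma stdPdf_eq {n : ℕ} (z : Fin n → ℝ) :
    stdPdf z = ((Real.sqrt (2 * Real.pi))⁻¹) ^ n * Real.exp (-(1/2) * (z ⬝ᵥ z)) := by
  unfold stdPdf phi
  rw [Finset.prod_mul_distrib, Finset.prod_const, ← Real.exp_sum]
  congr 1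
  · simp
  · congr 1
    rw [dotProduct, Finset.mul_sum]
    exact Finset.sum_congr rfl fun i _ => by ring

open scoped MatrixOrder in
lemma gauss_transform {n : ℕ} {S : Matrix (Fin n) (Fin n) ℝ} (hS : S.PosDef) (μ : Fin n → ℝ)
    (f : (Fin n → ℝ) → ℝ) (hf : Continuous f) :
    ∫ x, gaussPdf μ S x * f x
      = ∫ z, stdPdf z * f (μ + CFC.sqrt S *ᵥ z) := by
  set L := CFC.sqrt S with hLdef
  have hpsd : L.PosSemidef := Matrix.nonneg_iff_posSemidef.mp (CFC.sqrt_nonneg S)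
  have hLL : L * L = S := CFC.sqrt_mul_sqrt_self S (Matrix.nonneg_iff_posSemidef.mpr hS.posSemidef)
  have hLsym : Lᵀ = L := by
    rw [← Matrix.conjTranspose_eq_transpose_of_trivial]
    exact hpsd.isHermitian
  have hSsym : Sᵀ = S := by
    rw [← Matrix.conjTranspose_eq_transpose_of_trivial]
    exact hS.isHermitian
  have hdetS : 0 < S.det := hS.det_pos
  have hdetL2 : L.det * L.det = S.det := by rw [← Matrix.det_mul, hLL]
  have hdetLnn : 0 ≤ L.det := by
    rw [hpsd.isHermitian.det_eq_prod_eigenvalues]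
    exact Finset.prod_nonneg fun i _ => hpsd.eigenvalues_nonneg i
  have hdetLne : L.det ≠ 0 := by
    intro h
    rw [h, mul_zero] at hdetL2
    exact absurd hdetL2.symm (ne_of_gt hdetS)
  have hdetLpos : 0 < L.det := lt_of_le_of_ne hdetLnn (Ne.symm hdetLne)
  have hdetLeq : L.det = Real.sqrt S.det := by
    rw [← hdetL2, Real.sqrt_mul_self hdetLnn]
  have hkey : (S⁻¹ * L)ᵀ * L = 1 := by
    rw [Matrix.transpose_mul, hLsym, Matrix.transpose_nonsing_inv, hSsym, ← hLL,
      Matrix.mul_inv_rev, Matrix.mul_assoc, ← Matrix.mul_assoc, ← Matrix.mul_assoc,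
      Matrix.mul_nonsing_inv L (isUnit_iff_ne_zero.2 hdetLne), Matrix.one_mul, Matrix.nonsing_inv_mul L (isUnit_iff_ne_zero.2 hdetLne)]
  have hquad : ∀ z : Fin n → ℝ, (L *ᵥ z) ⬝ᵥ (S⁻¹ *ᵥ (L *ᵥ z)) = z ⬝ᵥ z := by
    intro z
    rw [Matrix.mulVec_mulVec, Matrix.dotProduct_mulVec, ← Matrix.mulVec_transpose,
      Matrix.mulVec_mulVec, hkey, Matrix.one_mulVec]
  have hmap : Measure.map (⇑(Matrix.toLin' L)) volume
      = ENNReal.ofReal (|L.det⁻¹|) • volume :=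
    Real.map_matrix_volume_pi_eq_smul_volume_pi hdetLne
  set F : (Fin n → ℝ) → ℝ := fun x => gaussPdf μ S x * f x with hF
  have hFc : Continuous F := (continuous_gaussPdf μ S).mul hf
  have hLcont : Continuous (⇑(Matrix.toLin' L) : (Fin n → ℝ) → (Fin n → ℝ)) :=
    LinearMap.continuous_on_pi _
  have hg : AEStronglyMeasurable (fun y : Fin n → ℝ => F (μ + y))
      (Measure.map (⇑(Matrix.toLin' L)) volume) :=
    (hFc.comp (continuous_const.add continuous_id)).aestronglyMeasurable
  have h2 : ∫ y, F (μ + y) ∂(Measure.map (⇑(Matrix.toLin' L)) volume)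
      = ∫ z, F (μ + L *ᵥ z) := by
    rw [MeasureTheory.integral_map hLcont.measurable.aemeasurable hg]
    simp_rw [Matrix.toLin'_apply]
  have key : ∫ z, F (μ + L *ᵥ z) = |L.det⁻¹| * ∫ x, F x := by
    rw [← h2, hmap, integral_smul_measure, ENNReal.toReal_ofReal (abs_nonneg _)]
    congr 1
    exact integral_add_left_eq_self F μ
  have key2 : ∫ x, F x = L.det * ∫ z, F (μ + L *ᵥ z) := by
    rw [key, abs_of_pos (inv_pos.2 hdetLpos)]
    field_simp
  rw [hF] at key2
  rw [key2, ← integral_const_mul]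
  congr 1
  funext z
  show L.det * (gaussPdf μ S (μ + L *ᵥ z) * f (μ + L *ᵥ z)) = _
  rw [stdPdf_eq]
  unfold gaussPdf
  rw [add_sub_cancel_left, hquad]
  have hconst : L.det * (Real.sqrt ((2 * Real.pi) ^ n * S.det))⁻¹
      = ((Real.sqrt (2 * Real.pi))⁻¹) ^ n := by
    have h3 : Real.sqrt ((2 * Real.pi) ^ n) = (Real.sqrt (2 * Real.pi)) ^ n := by
      rw [show (2 * Real.pi) ^ n = ((Real.sqrt (2 * Real.pi)) ^ n) ^ 2 by
        rw [← pow_mul, mul_comm n 2, pow_mul, Real.sq_sqrt (by positivity)]]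
      exact Real.sqrt_sq (by positivity)
    rw [hdetLeq, Real.sqrt_mul (by positivity), h3, mul_inv, inv_pow]
    have h4 : Real.sqrt S.det ≠ 0 := Real.sqrt_ne_zero'.2 hdetS
    field_simp
  rw [← hconst]
  ring

lemma expand_quad {n k : ℕ} (D : Matrix (Fin k) (Fin n) ℝ) (w : Fin k → ℝ) (z : Fin n → ℝ) :
    (D *ᵥ z + w) ⬝ᵥ (D *ᵥ z + w)
      = z ⬝ᵥ ((Dᵀ * D) *ᵥ z) + 2 * ((Dᵀ *ᵥ w) ⬝ᵥ z) + w ⬝ᵥ w := by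
  rw [add_dotProduct, dotProduct_add, dotProduct_add]
  have e2 : (D *ᵥ z) ⬝ᵥ (D *ᵥ z) = z ⬝ᵥ ((Dᵀ * D) *ᵥ z) := by
    rw [Matrix.dotProduct_mulVec, ← Matrix.mulVec_transpose, Matrix.mulVec_mulVec,
      dotProduct_comm]
  have e3 : (D *ᵥ z) ⬝ᵥ w = (Dᵀ *ᵥ w) ⬝ᵥ z := by
    rw [dotProduct_comm, Matrix.dotProduct_mulVec, ← Matrix.mulVec_transpose]
  have e4 : w ⬝ᵥ (D *ᵥ z) = (Dᵀ *ᵥ w) ⬝ᵥ z := by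
    rw [Matrix.dotProduct_mulVec, ← Matrix.mulVec_transpose]
  rw [e2, e3, e4]
  ring

open scoped MatrixOrder in
lemma gauss_quad {n k : ℕ} {S : Matrix (Fin n) (Fin n) ℝ} (hS : S.PosDef) (μ : Fin n → ℝ)
    (C : Matrix (Fin k) (Fin n) ℝ) (u : Fin k → ℝ) (c : ℝ) :
    ∫ x, gaussPdf μ S x * (c + (C *ᵥ x + u) ⬝ᵥ (C *ᵥ x + u))
      = c + (Cᵀ * C * S).trace + (C *ᵥ μ + u) ⬝ᵥ (C *ᵥ μ + u) := by
  have hf : Continuous (fun x : Fin n → ℝ => c + (C *ᵥ x + u) ⬝ᵥ (C *ᵥ x + u)) := by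
    have h1 : Continuous fun x : Fin n → ℝ => C *ᵥ x + u :=
      (continuous_const.matrix_mulVec continuous_id).add continuous_const
    exact continuous_const.add (h1.dotProduct h1)
  rw [gauss_transform hS μ _ hf]
  set L := CFC.sqrt S with hLdef
  have hLL : L * L = S := CFC.sqrt_mul_sqrt_self S (Matrix.nonneg_iff_posSemidef.mpr hS.posSemidef)
  have hLsym : Lᵀ = L := by
    rw [← Matrix.conjTranspose_eq_transpose_of_trivial]
    exact (Matrix.nonneg_iff_posSemidef.mp (CFC.sqrt_nonneg S)).isHermitian
  set D := C * L with hD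
  set w := C *ᵥ μ + u with hw
  set a := Dᵀ *ᵥ w with ha
  set M := Dᵀ * D with hM
  have hpt : ∀ z : Fin n → ℝ,
      stdPdf z * (c + (C *ᵥ (μ + L *ᵥ z) + u) ⬝ᵥ (C *ᵥ (μ + L *ᵥ z) + u))
      = stdPdf z * ((c + w ⬝ᵥ w) + 2 * (a ⬝ᵥ z) + z ⬝ᵥ (M *ᵥ z)) := by
    intro z
    congr 1
    have e1 : C *ᵥ (μ + L *ᵥ z) + u = D *ᵥ z + w := by
      rw [Matrix.mulVec_add, Matrix.mulVec_mulVec, hw, hD]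
      abel
    rw [e1, expand_quad D w z]
    ring
  simp_rw [hpt]
  rw [std_quad]
  have htr : M.trace = (Cᵀ * C * S).trace := by
    calc M.trace = ((Lᵀ * Cᵀ) * (C * L)).trace := by rw [hM, hD, Matrix.transpose_mul]
    _ = (Lᵀ * (Cᵀ * (C * L))).trace := by rw [Matrix.mul_assoc]
    _ = ((Cᵀ * (C * L)) * Lᵀ).trace := Matrix.trace_mul_comm _ _
    _ = (Cᵀ * C * S).trace := by
        rw [hLsym, Matrix.mul_assoc Cᵀ (C * L) L, Matrix.mul_assoc C L L, hLL,
          ← Matrix.mul_assoc]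
  rw [htr]
  ring

lemma gauss_quad0 {n k : ℕ} {S : Matrix (Fin n) (Fin n) ℝ} (hS : S.PosDef) (μ : Fin n → ℝ)
    (C : Matrix (Fin k) (Fin n) ℝ) (u : Fin k → ℝ) :
    ∫ x, gaussPdf μ S x * ((C *ᵥ x + u) ⬝ᵥ (C *ᵥ x + u))
      = (Cᵀ * C * S).trace + (C *ᵥ μ + u) ⬝ᵥ (C *ᵥ μ + u) := by
  have h := gauss_quad hS μ C u 0
  simpa using h

lemma trace_vecMulVec {n : ℕ} (v w : Fin n → ℝ) : (Matrix.vecMulVec v w).trace = v ⬝ᵥ w := by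
  simp [Matrix.trace, Matrix.diag, Matrix.vecMulVec_apply, dotProduct]

lemma vecMulVec_mulVec {n k : ℕ} (P : Matrix (Fin k) (Fin n) ℝ) (v : Fin n → ℝ) :
    Matrix.vecMulVec (P *ᵥ v) (P *ᵥ v) = P * Matrix.vecMulVec v v * Pᵀ := by
  ext i j
  simp only [Matrix.vecMulVec_apply, Matrix.mul_apply, Matrix.mulVec, dotProduct,
    Matrix.transpose_apply, Matrix.vecMulVec_apply]
  rw [Finset.sum_mul_sum]
  rw [Finset.sum_comm]
  refine Finset.sum_congr rfl fun l _ => ?_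
  rw [Finset.sum_mul]
  refine Finset.sum_congr rfl fun k' _ => ?_
  ring

lemma dot_self_eq_trace {n k : ℕ} (P : Matrix (Fin k) (Fin n) ℝ) (v : Fin n → ℝ) :
    (P *ᵥ v) ⬝ᵥ (P *ᵥ v) = (P * Matrix.vecMulVec v v * Pᵀ).trace := by
  rw [← vecMulVec_mulVec, trace_vecMulVec]

/-- Full misspecified Bayes risk formula: with data generated as Y = G̃ m + ε but
inverted with model matrix G,
Risk = Tr(Spos) + Tr(Spos (H̃-H)(Spr + μpr μprᵀ)(H̃-H)ᵀ Spos)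
         - Tr(Spos ((H̃-H) + (H̃-H)ᵀ) Spos). -/
theorem bayes_risk_misspecified {d q : ℕ}
    (G Gt : Matrix (Fin q) (Fin d) ℝ)
    (Spr : Matrix (Fin d) (Fin d) ℝ) (Se : Matrix (Fin q) (Fin q) ℝ)
    (hpr : Spr.PosDef) (hε : Se.PosDef)
    (μpr : Fin d → ℝ)
    (H Ht : Matrix (Fin d) (Fin d) ℝ)
    (hH : H = Gᵀ * Se⁻¹ * G) (hHt : Ht = Gᵀ * Se⁻¹ * Gt)
    (Spos : Matrix (Fin d) (Fin d) ℝ)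
    (hSpos : Spos = (H + Spr⁻¹)⁻¹)
    (μpos : (Fin q → ℝ) → (Fin d → ℝ))
    (hμpos : ∀ y, μpos y = Spos *ᵥ (Spr⁻¹ *ᵥ μpr + Gᵀ *ᵥ (Se⁻¹ *ᵥ y))) :
    (∫ m : Fin d → ℝ, gaussPdf μpr Spr m *
        ∫ e : Fin q → ℝ, gaussPdf 0 Se e *
          ((μpos (Gt *ᵥ m + e) - m) ⬝ᵥ (μpos (Gt *ᵥ m + e) - m))) =
      Spos.trace +
        (Spos * (Ht - H) * (Spr + Matrix.vecMulVec μpr μpr) * (Ht - H)ᵀ * Spos).trace -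
        (Spos * ((Ht - H) + (Ht - H)ᵀ) * Spos).trace := by
  -- basic symmetry / invertibility facts
  have hSeInv : Se⁻¹.PosDef := hε.inv
  have hSeSym : Seᵀ = Se := by
    rw [← Matrix.conjTranspose_eq_transpose_of_trivial]; exact hε.isHermitian
  have hSeInvSym : (Se⁻¹)ᵀ = Se⁻¹ := by rw [Matrix.transpose_nonsing_inv, hSeSym]
  have hSprInv : Spr⁻¹.PosDef := hpr.inv
  have hSprSym : Sprᵀ = Spr := by
    rw [← Matrix.conjTranspose_eq_transpose_of_trivial]; exact hpr.isHermitian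
  have hSprInvSym : (Spr⁻¹)ᵀ = Spr⁻¹ := by rw [Matrix.transpose_nonsing_inv, hSprSym]
  have hSprDet : IsUnit Spr.det := isUnit_iff_ne_zero.2 (ne_of_gt hpr.det_pos)
  have hSeDet : IsUnit Se.det := isUnit_iff_ne_zero.2 (ne_of_gt hε.det_pos)
  have hHpsd : H.PosSemidef := by
    have h := Matrix.PosSemidef.conjTranspose_mul_mul_same hSeInv.posSemidef G
    rw [hH, ← Matrix.conjTranspose_eq_transpose_of_trivial G]
    exact h
  have hHsym : Hᵀ = H := by
    rw [← Matrix.conjTranspose_eq_transpose_of_trivial]; exact hHpsd.isHermitian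
  have hP : (H + Spr⁻¹).PosDef := Matrix.PosDef.posSemidef_add hHpsd hSprInv
  have hPdet : IsUnit (H + Spr⁻¹).det := isUnit_iff_ne_zero.2 (ne_of_gt hP.det_pos)
  have hSpos1 : Spos * (H + Spr⁻¹) = 1 := by
    rw [hSpos]; exact Matrix.nonsing_inv_mul _ hPdet
  have hSpos2 : (H + Spr⁻¹) * Spos = 1 := by
    rw [hSpos]; exact Matrix.mul_nonsing_inv _ hPdet
  have hSposSym : Sposᵀ = Spos := by
    rw [hSpos, Matrix.transpose_nonsing_inv, Matrix.transpose_add, hHsym, hSprInvSym]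
  -- the three matrices
  set Amat : Matrix (Fin d) (Fin d) ℝ := Spos * Ht - 1 with hAmat
  set Bmat : Matrix (Fin d) (Fin q) ℝ := Spos * Gᵀ * Se⁻¹ with hBmat
  set bb : Fin d → ℝ := Spos *ᵥ (Spr⁻¹ *ᵥ μpr) with hbb
  -- pointwise decomposition of the error vector
  have step1 : ∀ (m : Fin d → ℝ) (e : Fin q → ℝ),
      μpos (Gt *ᵥ m + e) - m = Bmat *ᵥ e + (Amat *ᵥ m + bb) := by
    intro m e
    rw [hμpos]
    simp only [hAmat, hBmat, hbb, hHt, Matrix.mulVec_add, Matrix.mulVec_mulVec, Matrix.sub_mulVec,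
      Matrix.one_mulVec, Matrix.mul_assoc]
    abel
  -- inner integral
  have step2 : ∀ m : Fin d → ℝ,
      (∫ e : Fin q → ℝ, gaussPdf 0 Se e *
          ((μpos (Gt *ᵥ m + e) - m) ⬝ᵥ (μpos (Gt *ᵥ m + e) - m)))
        = (Bmatᵀ * Bmat * Se).trace + ((Amat *ᵥ m + bb) ⬝ᵥ (Amat *ᵥ m + bb)) := by
    intro m
    have h := step1 m
    simp_rw [h]
    rw [gauss_quad0 hε 0 Bmat (Amat *ᵥ m + bb), Matrix.mulVec_zero, zero_add]
  simp_rw [step2]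
  rw [gauss_quad hpr μpr Amat bb ((Bmatᵀ * Bmat * Se).trace)]
  -- identify the mean term
  have hAK : Amat = Spos * ((Ht - H) - Spr⁻¹) := by
    rw [hAmat, ← hSpos1]
    noncomm_ring
  have hvec : Amat *ᵥ μpr + bb = (Spos * (Ht - H)) *ᵥ μpr := by
    rw [hAK, hbb, Matrix.mulVec_mulVec, ← Matrix.add_mulVec]
    noncomm_ring
  rw [hvec, dot_self_eq_trace]
  -- now pure trace algebra
  have tB : (Bmatᵀ * Bmat * Se).trace = (Spos * Spos * H).trace := by
    have h1 : Bmatᵀ * Bmat * Se = Se⁻¹ * (G * (Spos * (Spos * Gᵀ))) := by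
      rw [hBmat]
      simp only [Matrix.transpose_mul, Matrix.transpose_transpose, hSeInvSym, hSposSym,
        Matrix.mul_assoc]
      rw [Matrix.nonsing_inv_mul Se hSeDet, Matrix.mul_one]
    calc (Bmatᵀ * Bmat * Se).trace
        = (Se⁻¹ * (G * (Spos * (Spos * Gᵀ)))).trace := by rw [h1]
      _ = ((G * (Spos * (Spos * Gᵀ))) * Se⁻¹).trace := Matrix.trace_mul_comm _ _
      _ = (G * (Spos * (Spos * (Gᵀ * Se⁻¹)))).trace := by simp only [Matrix.mul_assoc]
      _ = ((Spos * (Spos * (Gᵀ * Se⁻¹))) * G).trace := Matrix.trace_mul_comm _ _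
      _ = (Spos * Spos * H).trace := by rw [hH]; simp only [Matrix.mul_assoc]
  have tA : (Amatᵀ * Amat * Spr).trace
      = (Spos * Spos * ((Ht - H) * Spr * (Ht - H)ᵀ)).trace
        - (Spos * Spos * ((Ht - H) + (Ht - H)ᵀ)).trace
        + (Spos * Spos * Spr⁻¹).trace := by
    have h1 : Spr * Spr⁻¹ = 1 := Matrix.mul_nonsing_inv Spr hSprDet
    have h2 : Spr⁻¹ * Spr = 1 := Matrix.nonsing_inv_mul Spr hSprDet
    have hKT : ((Ht - H) - Spr⁻¹)ᵀ = (Ht - H)ᵀ - Spr⁻¹ := by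
      rw [Matrix.transpose_sub, hSprInvSym]
    have hexp : ((Ht - H) - Spr⁻¹) * Spr * (((Ht - H) - Spr⁻¹)ᵀ)
        = (Ht - H) * Spr * (Ht - H)ᵀ - ((Ht - H) + (Ht - H)ᵀ) + Spr⁻¹ := by
      rw [hKT]
      have e : ((Ht - H) - Spr⁻¹) * Spr = (Ht - H) * Spr - 1 := by
        rw [Matrix.sub_mul, h2]
      rw [e, Matrix.sub_mul ((Ht - H) * Spr) 1, Matrix.mul_sub, Matrix.one_mul,
        Matrix.mul_assoc (Ht - H) Spr Spr⁻¹, h1, Matrix.mul_one]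
      noncomm_ring
    calc (Amatᵀ * Amat * Spr).trace
        = ((((Ht - H) - Spr⁻¹)ᵀ) * (Spos * (Spos * (((Ht - H) - Spr⁻¹) * Spr)))).trace := by
          rw [hAK]
          simp only [Matrix.transpose_mul, hSposSym, Matrix.mul_assoc]
      _ = ((Spos * (Spos * (((Ht - H) - Spr⁻¹) * Spr))) * (((Ht - H) - Spr⁻¹)ᵀ)).trace :=
          Matrix.trace_mul_comm _ _
      _ = (Spos * Spos * (((Ht - H) - Spr⁻¹) * Spr * (((Ht - H) - Spr⁻¹)ᵀ))).trace := by
          simp only [Matrix.mul_assoc]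
      _ = _ := by
          rw [hexp, Matrix.mul_add, Matrix.mul_sub, Matrix.trace_add, Matrix.trace_sub]
  have tC : (Spos * (Ht - H) * Matrix.vecMulVec μpr μpr * (Spos * (Ht - H))ᵀ).trace
      = (Spos * Spos * ((Ht - H) * Matrix.vecMulVec μpr μpr * (Ht - H)ᵀ)).trace := by
    have h : Spos * (Ht - H) * Matrix.vecMulVec μpr μpr * (Spos * (Ht - H))ᵀ
        = (Spos * (Ht - H) * Matrix.vecMulVec μpr μpr * (Ht - H)ᵀ) * Spos := by
      simp only [Matrix.transpose_mul, hSposSym, Matrix.mul_assoc]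
    rw [h, Matrix.trace_mul_comm]
    simp only [Matrix.mul_assoc]
  have tR1 : (Spos * (Ht - H) * (Spr + Matrix.vecMulVec μpr μpr) * (Ht - H)ᵀ * Spos).trace
      = (Spos * Spos * ((Ht - H) * Spr * (Ht - H)ᵀ)).trace
        + (Spos * Spos * ((Ht - H) * Matrix.vecMulVec μpr μpr * (Ht - H)ᵀ)).trace := by
    have h : Spos * (Ht - H) * (Spr + Matrix.vecMulVec μpr μpr) * (Ht - H)ᵀ * Spos
        = (Spos * (Ht - H) * Spr * (Ht - H)ᵀ) * Spos
          + (Spos * (Ht - H) * Matrix.vecMulVec μpr μpr * (Ht - H)ᵀ) * Spos := by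
      noncomm_ring
    rw [h, Matrix.trace_add, Matrix.trace_mul_comm (Spos * (Ht - H) * Spr * (Ht - H)ᵀ) Spos,
      Matrix.trace_mul_comm (Spos * (Ht - H) * Matrix.vecMulVec μpr μpr * (Ht - H)ᵀ) Spos]
    simp only [Matrix.mul_assoc]
  have tR2 : (Spos * ((Ht - H) + (Ht - H)ᵀ) * Spos).trace
      = (Spos * Spos * ((Ht - H) + (Ht - H)ᵀ)).trace := by
    rw [Matrix.trace_mul_comm (Spos * ((Ht - H) + (Ht - H)ᵀ)) Spos]
    simp only [Matrix.mul_assoc]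
  have tS : (Spos * Spos * H).trace + (Spos * Spos * Spr⁻¹).trace = Spos.trace := by
    have h : Spos * Spos * (H + Spr⁻¹) = Spos := by
      rw [Matrix.mul_assoc, hSpos1, Matrix.mul_one]
    rw [← Matrix.trace_add, ← Matrix.mul_add, h]
  rw [tB, tA, tC, tR1, tR2]
  linarith [tS]
end
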